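/- For all integers c ≥ 2 and n ≥ 0, the graphs G(c,n) and G(c, c(n+c−1)) are move equivalent via the moves (O) and (I+). -/

import Mathlib

open Classical

/-- A graph in the sense of graph C*-algebras: finitely many vertices,
countably many edges, with source and range maps. -/
structure CKGraph where
  V : Type
  E : Type
  finV : Finite V
  cntE : Countable E
  s : E → V
  r : E → V

attribute [instance] CKGraph.finV CKGraph.cntE

namespace CKGraph

/-- Isomorphism of graphs: bijections on vertices and edges intertwining
the source and range maps. -/
def Iso (G H : CKGraph) : Prop :=
  ∃ (f : G.V ≃ H.V) (g : G.E ≃ H.E),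
    (∀ e, H.s (g e) = f (G.s e)) ∧ (∀ e, H.r (g e) = f (G.r e))

/-- A vertex is a source if it receives no edges. -/
def IsSource (G : CKGraph) (v : G.V) : Prop := ∀ e, G.r e ≠ v

/-- A vertex is a sink if it emits no edges. -/
def IsSink (G : CKGraph) (v : G.V) : Prop := ∀ e, G.s e ≠ v

/-- A vertex is regular if it emits at least one and only finitely many edges. -/
def Regular (G : CKGraph) (v : G.V) : Prop :=
  Nonempty {e : G.E // G.s e = v} ∧ Finite {e : G.E // G.s e = v}

/-- The outsplit graph of `G` at the vertex `w` with respect to the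
partition of `s⁻¹(w)` encoded by `P`. -/
noncomputable def outsplit (G : CKGraph) (w : G.V) (n : ℕ)
    (P : {e : G.E // G.s e = w} → Fin n) : CKGraph where
  V := {v : G.V // v ≠ w} ⊕ Fin n
  E := {e : G.E // G.r e ≠ w} ⊕ ({e : G.E // G.r e = w} × Fin n)
  finV := inferInstance
  cntE := inferInstance
  s := Sum.elim
    (fun e => if h : G.s e.1 = w then Sum.inr (P ⟨e.1, h⟩) else Sum.inl ⟨G.s e.1, h⟩)
    (fun ei => if h : G.s ei.1.1 = w then Sum.inr (P ⟨ei.1.1, h⟩)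
               else Sum.inl ⟨G.s ei.1.1, h⟩)
  r := Sum.elim
    (fun e => Sum.inl ⟨G.r e.1, e.2⟩)
    (fun ei => Sum.inr ei.2)

/-- Move (O): `H` is obtained from `G` by an outsplit at a non-sink `w`
with respect to a partition of `s⁻¹(w)` into nonempty sets, at most one of
which is infinite. -/
def MoveO (G H : CKGraph) : Prop :=
  ∃ (w : G.V) (n : ℕ) (P : {e : G.E // G.s e = w} → Fin n),
    Nonempty {e : G.E // G.s e = w} ∧
    Function.Surjective P ∧
    (∀ i j : Fin n, {e | P e = i}.Infinite → {e | P e = j}.Infinite → i = j) ∧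
    Iso (G.outsplit w n P) H

/-- The insplit graph of `G` at the regular vertex `w` with respect to the
partition of `r⁻¹(w)` (into possibly empty sets) encoded by `P`. -/
noncomputable def insplit (G : CKGraph) (w : G.V) (n : ℕ)
    (P : {e : G.E // G.r e = w} → Fin n) : CKGraph where
  V := {v : G.V // v ≠ w} ⊕ Fin n
  E := {e : G.E // G.s e ≠ w} ⊕ ({e : G.E // G.s e = w} × Fin n)
  finV := inferInstance
  cntE := inferInstance
  s := Sum.elim
    (fun e => Sum.inl ⟨G.s e.1, e.2⟩)
    (fun ei => Sum.inr ei.2)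
  r := Sum.elim
    (fun e => if h : G.r e.1 = w then Sum.inr (P ⟨e.1, h⟩) else Sum.inl ⟨G.r e.1, h⟩)
    (fun ei => if h : G.r ei.1.1 = w then Sum.inr (P ⟨ei.1.1, h⟩)
               else Sum.inl ⟨G.r ei.1.1, h⟩)

/-- Move (I-): `H` is obtained from `G` by an insplit at a regular vertex `w`
with respect to a partition of `r⁻¹(w)` into `n ≥ 1` possibly empty sets. -/
def MoveIm (G H : CKGraph) : Prop :=
  ∃ (w : G.V) (n : ℕ) (P : {e : G.E // G.r e = w} → Fin n),
    G.Regular w ∧ 1 ≤ n ∧ Iso (G.insplit w n P) H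

/-- Move (I+): `G` and `H` are both obtained from a common graph `K` by
insplitting at the same regular vertex via two partitions with the same
number of (possibly empty) sets. -/
def MoveIp (G H : CKGraph) : Prop :=
  ∃ (K : CKGraph) (w : K.V) (n : ℕ)
    (P Q : {e : K.E // K.r e = w} → Fin n),
    K.Regular w ∧ 1 ≤ n ∧
    Iso (K.insplit w n P) G ∧ Iso (K.insplit w n Q) H

/-- The reduced graph of `G` at a regular vertex `w` supporting no loop. -/
noncomputable def reduce (G : CKGraph) (w : G.V) : CKGraph where
  V := {v : G.V // v ≠ w} ⊕ Unit
  E := {e : G.E // G.s e ≠ w ∧ G.r e ≠ w} ⊕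
       (({e : G.E // G.r e = w} × {f : G.E // G.s f = w}) ⊕ {f : G.E // G.s f = w})
  finV := inferInstance
  cntE := inferInstance
  s := Sum.elim
    (fun e => Sum.inl ⟨G.s e.1, e.2.1⟩)
    (Sum.elim
      (fun ef => if h : G.s ef.1.1 = w then Sum.inr () else Sum.inl ⟨G.s ef.1.1, h⟩)
      (fun _ => Sum.inr ()))
  r := Sum.elim
    (fun e => Sum.inl ⟨G.r e.1, e.2.2⟩)
    (Sum.elim
      (fun ef => if h : G.r ef.2.1 = w then Sum.inr () else Sum.inl ⟨G.r ef.2.1, h⟩)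
      (fun f => if h : G.r f.1 = w then Sum.inr () else Sum.inl ⟨G.r f.1, h⟩))

/-- Move (R+): `H` is obtained from `G` by a unital reduction at a regular
vertex `w` which supports no loop. -/
def MoveRp (G H : CKGraph) : Prop :=
  ∃ w : G.V, G.Regular w ∧ (∀ e : G.E, ¬ (G.s e = w ∧ G.r e = w)) ∧
    Iso (G.reduce w) H

/-- Two graphs are move equivalent via the relation `R` (describing the
allowed moves) if there is a finite sequence of graphs starting at the first,
each obtained from the previous by a move in `R` or the inverse of such a
move, and ending at a graph isomorphic to the second. -/
def MoveEquiv (R : CKGraph → CKGraph → Prop) (G H : CKGraph) : Prop :=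
  ∃ K, Relation.ReflTransGen (fun A B => R A B ∨ R B A) G K ∧ Iso K H

/-- The graph `G(c,n)`: a vertex with `c` loops, receiving `n` edges from a
second (source) vertex; for `n = 0` the source vertex is omitted. -/
def Gcn (c n : ℕ) : CKGraph where
  V := Unit ⊕ Fin (min n 1)
  E := Fin c ⊕ Fin n
  finV := inferInstance
  cntE := inferInstance
  s := Sum.elim (fun _ => Sum.inl ()) (fun e => Sum.inr ⟨0, lt_min e.pos one_pos⟩)
  r := fun _ => Sum.inl ()

/-- The graph with adjacency matrix `A` (the `(i,j)` entry being the number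
of edges from vertex `i` to vertex `j`). -/
def adjGraph {k : ℕ} (A : Fin k → Fin k → ℕ) : CKGraph where
  V := Fin k
  E := (i : Fin k) × (j : Fin k) × Fin (A i j)
  finV := inferInstance
  cntE := inferInstance
  s := fun e => e.1
  r := fun e => e.2.1


/-- Entry-wise product of two 2×2 matrices of natural numbers. -/
def matMul (A B : Fin 2 → Fin 2 → ℕ) : Fin 2 → Fin 2 → ℕ := fun i j => ∑ l, A i l * B l j

/-- Matrix-vector product for 2×2 matrices of natural numbers. -/
def matVec (A : Fin 2 → Fin 2 → ℕ) (D : Fin 2 → ℕ) : Fin 2 → ℕ := fun i => ∑ l, A i l * D l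

def T1 : Fin 2 → Fin 2 → ℕ := ![![1, 1], ![0, 1]]

def T2 : Fin 2 → Fin 2 → ℕ := ![![1, 0], ![1, 1]]

/-- The graph represented by the pair `(D, B)`: the graph `Γ(d₁-1, d₂-1; a)`
with `a i j = b j i + δ i j`. -/
def pairGraph (D : Fin 2 → ℕ) (B : Fin 2 → Fin 2 → ℕ) : CKGraph :=
  adjGraph ![![0, D 0 - 1, D 1 - 1], ![0, B 0 0 + 1, B 1 0], ![0, B 0 1, B 1 1 + 1]]

/-- Number of edges emitted by the auxiliary source attached above vertex
`u_t` in the graph `F(n₁,…,n_k)`; here `n t` denotes `n_{t+1}` (0-indexed). -/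
def srcCount (k : ℕ) (n : Fin k → ℕ) (t : Fin k) : ℕ :=
  if t.val + 1 < k then n t - 1 else n t

/-- The graph `F(n₁,…,n_k)` : vertices `u₀,…,u_{k-1}` (`u₀` a sink), one edge
`u_j → u_{j-1}` for `1 ≤ j ≤ k-1`, and for each `t` a source emitting
`srcCount` edges to `u_t` (present only when that count is positive), so that
the number of paths of length `i` ending at `u₀` is `nᵢ`. -/
def Fgraph (k : ℕ) (n : Fin k → ℕ) : CKGraph where
  V := Fin k ⊕ {t : Fin k // 0 < srcCount k n t}
  E := {j : Fin k // 0 < j.val} ⊕ ((t : Fin k) × Fin (srcCount k n t))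
  finV := inferInstance
  cntE := inferInstance
  s := Sum.elim (fun j => Sum.inl j.1) (fun te => Sum.inr ⟨te.1, te.2.pos⟩)
  r := Sum.elim
    (fun j => Sum.inl ⟨j.1.val - 1, lt_of_le_of_lt (Nat.sub_le _ _) j.1.isLt⟩)
    (fun te => Sum.inl te.1)

/-- The graph `E(n₁,…,n_k)` : a cycle `v₀ → v₁ → ⋯ → v_{k-1} → v₀` together
with a single extra vertex emitting `n i` edges to `v i`; the extra vertex is
omitted when all `n i = 0`. -/
def Egraph (k : ℕ) (n : Fin k → ℕ) : CKGraph where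
  V := Fin k ⊕ {_u : Unit // ∃ i, 0 < n i}
  E := Fin k ⊕ ((i : Fin k) × Fin (n i))
  finV := inferInstance
  cntE := inferInstance
  s := Sum.elim (fun j => Sum.inl j) (fun ie => Sum.inr ⟨(), ⟨ie.1, ie.2.pos⟩⟩)
  r := Sum.elim (fun j => Sum.inl ⟨(j.val + 1) % k, Nat.mod_lt _ j.pos⟩)
    (fun ie => Sum.inl ie.1)

/-- The graph `T k` : vertices `u₀,…,u_k`, countably infinitely many loops at
`u₀` and exactly one edge `u_j → u_{j-1}` for `1 ≤ j ≤ k`. -/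
def Tgraph (k : ℕ) : CKGraph where
  V := Fin (k + 1)
  E := ℕ ⊕ {j : Fin (k + 1) // 0 < j.val}
  finV := inferInstance
  cntE := inferInstance
  s := Sum.elim (fun _ => ⟨0, Nat.succ_pos k⟩) (fun j => j.1)
  r := Sum.elim (fun _ => ⟨0, Nat.succ_pos k⟩)
    (fun j => ⟨j.1.val - 1, lt_of_le_of_lt (Nat.sub_le _ _) j.1.isLt⟩)

/-- One-step reachability: there is an edge from `u` to `v`. -/
def Step (G : CKGraph) (u v : G.V) : Prop := ∃ e, G.s e = u ∧ G.r e = v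

/-- There is a (possibly empty) path from `u` to `v`. -/
def Reaches (G : CKGraph) : G.V → G.V → Prop := Relation.ReflTransGen G.Step

/-- `v` lies on a cycle: there is a nontrivial path from `v` back to `v`. -/
def OnCycle (G : CKGraph) (v : G.V) : Prop := ∃ u, G.Step v u ∧ G.Reaches u v

/-- The core of `G`: the vertices lying on cycles if `G` has a cycle, and
otherwise the sinks. -/
def core (G : CKGraph) (v : G.V) : Prop :=
  ((∃ u, G.OnCycle u) → G.OnCycle v) ∧ ((¬ ∃ u, G.OnCycle u) → G.IsSink v)

/-- A transitional vertex: neither a source nor in the core. -/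
def Transitional (G : CKGraph) (v : G.V) : Prop := ¬ G.IsSource v ∧ ¬ G.core v

/-- The core hypotheses: any two vertices on cycles are mutually connected by
paths; if there is a cycle there are no sinks, otherwise there is exactly one
sink; every vertex reaches the core; and every non-core vertex emits only
finitely many edges. -/
structure CoreHyp (G : CKGraph) : Prop where
  conn : ∀ u v, G.OnCycle u → G.OnCycle v → G.Reaches u v
  noSinks : (∃ v, G.OnCycle v) → ∀ v, ¬ G.IsSink v
  uniqueSink : (¬ ∃ v, G.OnCycle v) → ∃! v, G.IsSink v
  reach : ∀ v, ∃ c, G.core c ∧ G.Reaches v c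
  finEmit : ∀ v, ¬ G.core v → Finite {e : G.E // G.s e = v}

/-- The core subgraph: core vertices together with all edges between them. -/
def coreSubgraph (G : CKGraph) : CKGraph where
  V := {v : G.V // G.core v}
  E := {e : G.E // G.core (G.s e) ∧ G.core (G.r e)}
  finV := inferInstance
  cntE := inferInstance
  s := fun e => ⟨G.s e.1, e.2.1⟩
  r := fun e => ⟨G.r e.1, e.2.2⟩

end CKGraph

open CKGraph

namespace GcnAux

/-- A reducible copy of `Gcn`. -/
abbrev GcnR (c n : ℕ) : CKGraph where
  V := Unit ⊕ Fin (min n 1)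
  E := Fin c ⊕ Fin n
  finV := inferInstance
  cntE := inferInstance
  s := Sum.elim (fun _ => Sum.inl ()) (fun e => Sum.inr ⟨0, lt_min e.pos one_pos⟩)
  r := fun _ => Sum.inl ()

/-- A reducible copy of `CKGraph.outsplit`. -/
noncomputable abbrev _root_.CKGraph.outsplitR (G : CKGraph) (w : G.V) (n : ℕ)
    (P : {e : G.E // G.s e = w} → Fin n) : CKGraph where
  V := {v : G.V // v ≠ w} ⊕ Fin n
  E := {e : G.E // G.r e ≠ w} ⊕ ({e : G.E // G.r e = w} × Fin n)
  finV := inferInstance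
  cntE := inferInstance
  s := Sum.elim
    (fun e => if h : G.s e.1 = w then Sum.inr (P ⟨e.1, h⟩) else Sum.inl ⟨G.s e.1, h⟩)
    (fun ei => if h : G.s ei.1.1 = w then Sum.inr (P ⟨ei.1.1, h⟩)
               else Sum.inl ⟨G.s ei.1.1, h⟩)
  r := Sum.elim
    (fun e => Sum.inl ⟨G.r e.1, e.2⟩)
    (fun ei => Sum.inr ei.2)

/-- A reducible copy of `CKGraph.insplit`. -/
noncomputable abbrev _root_.CKGraph.insplitR (G : CKGraph) (w : G.V) (n : ℕ)
    (P : {e : G.E // G.r e = w} → Fin n) : CKGraph where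
  V := {v : G.V // v ≠ w} ⊕ Fin n
  E := {e : G.E // G.s e ≠ w} ⊕ ({e : G.E // G.s e = w} × Fin n)
  finV := inferInstance
  cntE := inferInstance
  s := Sum.elim
    (fun e => Sum.inl ⟨G.s e.1, e.2⟩)
    (fun ei => Sum.inr ei.2)
  r := Sum.elim
    (fun e => if h : G.r e.1 = w then Sum.inr (P ⟨e.1, h⟩) else Sum.inl ⟨G.r e.1, h⟩)
    (fun ei => if h : G.r ei.1.1 = w then Sum.inr (P ⟨ei.1.1, h⟩)
               else Sum.inl ⟨G.r ei.1.1, h⟩)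

lemma iso_refl (G : CKGraph) : Iso G G :=
  ⟨Equiv.refl _, Equiv.refl _, fun _ => rfl, fun _ => rfl⟩

variable (c n m : ℕ)

lemma finE : Finite ((GcnR c m).E) := by
  show Finite (Fin c ⊕ Fin m); infer_instance

/-- vertices of `Gcn` other than the main (loop) vertex -/
def auxV : {v : (GcnR c m).V // v ≠ Sum.inl ()} ≃ Fin (min m 1) where
  toFun v := match v with
    | ⟨Sum.inl _, h⟩ => absurd rfl h
    | ⟨Sum.inr t, _⟩ => t
  invFun t := ⟨Sum.inr t, fun h => nomatch h⟩
  left_inv v := match v with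
    | ⟨Sum.inl _, h⟩ => absurd rfl h
    | ⟨Sum.inr _, _⟩ => rfl
  right_inv t := rfl

/-- edges of `Gcn` not emitted by the main vertex -/
def auxSrc : {e : (GcnR c m).E // (GcnR c m).s e ≠ Sum.inl ()} ≃ Fin m where
  toFun e := match e with
    | ⟨Sum.inl _, h⟩ => absurd rfl h
    | ⟨Sum.inr j, _⟩ => j
  invFun j := ⟨Sum.inr j, fun h => nomatch h⟩
  left_inv e := match e with
    | ⟨Sum.inl _, h⟩ => absurd rfl h
    | ⟨Sum.inr _, _⟩ => rfl
  right_inv j := rfl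

/-- edges of `Gcn` emitted by the main vertex, i.e. the loops -/
def auxLoop : {e : (GcnR c m).E // (GcnR c m).s e = Sum.inl ()} ≃ Fin c where
  toFun e := match e with
    | ⟨Sum.inl ℓ, _⟩ => ℓ
    | ⟨Sum.inr _, h⟩ => nomatch h
  invFun ℓ := ⟨Sum.inl ℓ, rfl⟩
  left_inv e := match e with
    | ⟨Sum.inl _, _⟩ => rfl
    | ⟨Sum.inr _, h⟩ => nomatch h
  right_inv ℓ := rfl

lemma hmin (hc : 0 < c) : min (c * n) 1 = min n 1 := by
  rcases n with _ | n
  · simp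
  · have : 0 < c * (n + 1) := Nat.mul_pos hc (Nat.succ_pos n)
    omega

lemma minpos (j : Fin (c * n)) : 0 < min n 1 := by
  rcases n with _ | n
  · exact absurd j.isLt (by simp)
  · simp

/-- Partition of the loops of `Gcn c n` into singletons (move 1). -/
def P0 (hc : 2 ≤ c) : {e : (GcnR c n).E // (GcnR c n).s e = Sum.inl ()} → Fin c :=
  fun e => Sum.elim id (fun _ => (⟨0, by omega⟩ : Fin c)) e.1

/-- The graph `H`: complete graph on `c` vertices plus a source emitting `n`
edges to each vertex; obtained by outsplitting `Gcn c n`. -/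
noncomputable abbrev G1 (hc : 2 ≤ c) : CKGraph :=
  (GcnR c n).outsplitR (Sum.inl ()) c (P0 c n hc)

/-- First partition of `r⁻¹(v)` in `K = Gcn c (c*n)` (gives `H`). -/
def P1 : {e : (GcnR c (c * n)).E // (GcnR c (c * n)).r e = Sum.inl ()} → Fin c :=
  fun e => Sum.elim id (fun j => (finProdFinEquiv.symm j).1) e.1

/-- Second partition: everything into part `0` (gives `B`). -/
abbrev Q1 (hc : 2 ≤ c) :
    {e : (GcnR c (c * n)).E // (GcnR c (c * n)).r e = Sum.inl ()} → Fin c :=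
  fun _ => ⟨0, by omega⟩

/-- The graph `B`. -/
noncomputable abbrev G2 (hc : 2 ≤ c) : CKGraph :=
  (GcnR c (c * n)).insplitR (Sum.inl ()) c (Q1 c n hc)

lemma Npos (hc : 2 ≤ c) : 0 < min (c * (n + c - 1)) 1 := by
  have h1 : 1 ≤ n + c - 1 := by omega
  have := Nat.mul_le_mul hc h1
  omega

/-- The source vertex of `Gcn c (c*(n+c-1))`. -/
abbrev w3 (hc : 2 ≤ c) : (GcnR c (c * (n + c - 1))).V :=
  Sum.inr ⟨0, Npos c n hc⟩

/-- Splitting of the edge set emitted by the source of `Gcn c (c*(n+c-1))`. -/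
def eN (hc : 2 ≤ c) : Fin (c * (n + c - 1)) ≃ Fin (c * (c - 1)) ⊕ Fin (c * n) :=
  (finCongr (by have h : n + c - 1 = (c - 1) + n := by omega
                rw [h, Nat.mul_add])).trans finSumFinEquiv.symm

/-- `Unit ⊕ Fin (c-1) ≃ Fin c`, with `()` going to `0`. -/
def eC (hc : 2 ≤ c) : (Unit ⊕ Fin (c - 1)) ≃ Fin c :=
  ((Equiv.sumCongr (Equiv.ofUnique Unit (Fin 1)) (Equiv.refl _)).trans
    finSumFinEquiv).trans (finCongr (by omega))

/-- The partition of the outgoing edges of the source of `Gcn c (c*(n+c-1))`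
into `c - 1` sets of size `c` and (when `n ≥ 1`) one set of size `c*n`. -/
abbrev P3 (hc : 2 ≤ c) :
    {e : (GcnR c (c * (n + c - 1))).E //
      (GcnR c (c * (n + c - 1))).s e = w3 c n hc} → Fin (c - 1 + min n 1) :=
  fun e => Sum.elim (fun _ => (⟨0, by omega⟩ : Fin (c - 1 + min n 1)))
    (fun j => Sum.elim
      (fun q => finSumFinEquiv (Sum.inl (finProdFinEquiv.symm q).2))
      (fun j' => finSumFinEquiv (Sum.inr ⟨0, minpos c n j'⟩))
      (eN c n hc j)) e.1

lemma move1 (hc : 2 ≤ c) : MoveO (GcnR c n) (G1 c n hc) := by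
  refine ⟨Sum.inl (), c, P0 c n hc, ⟨⟨Sum.inl ⟨0, by omega⟩, rfl⟩⟩, ?_, ?_, iso_refl _⟩
  · intro i
    exact ⟨⟨Sum.inl i, rfl⟩, rfl⟩
  · intro i j hi _
    haveI := finE c n
    exact absurd hi (Set.not_infinite.2 (Set.toFinite _))

/-- The vertex equivalence for the iso between the insplit of `Gcn c (c*n)`
along `P1` and the outsplit graph `G1`. -/
noncomputable def f1 (hc : 2 ≤ c) :
    ((GcnR c (c * n)).insplitR (Sum.inl ()) c (P1 c n)).V ≃ (G1 c n hc).V :=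
  Equiv.sumCongr
    ((auxV c (c * n)).trans
      ((finCongr (hmin c n (by omega))).trans (auxV c n).symm))
    (Equiv.refl (Fin c))

/-- The edge equivalence for the iso between the insplit of `Gcn c (c*n)`
along `P1` and the outsplit graph `G1`. -/
noncomputable def g1 (hc : 2 ≤ c) :
    ((GcnR c (c * n)).insplitR (Sum.inl ()) c (P1 c n)).E ≃ (G1 c n hc).E :=
  haveI : IsEmpty {e : (GcnR c n).E // (GcnR c n).r e ≠ Sum.inl ()} :=
    ⟨fun e => e.2 rfl⟩
  (Equiv.sumCongr (auxSrc c (c * n))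
      (Equiv.prodCongr (auxLoop c (c * n)) (Equiv.refl (Fin c)))).trans <|
  (Equiv.sumCongr finProdFinEquiv.symm (Equiv.prodComm (Fin c) (Fin c))).trans <|
  (Equiv.sumCongr (Equiv.prodComm (Fin c) (Fin n)) (Equiv.refl _)).trans <|
  (Equiv.sumComm _ _).trans <|
  (Equiv.sumProdDistrib (Fin c) (Fin n) (Fin c)).symm.trans <|
  (Equiv.prodCongr (Equiv.subtypeUnivEquiv (fun _ => rfl)).symm
      (Equiv.refl (Fin c))).trans <|
  (Equiv.emptySum _ _).symm

lemma move2_iso (hc : 2 ≤ c) :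
    Iso ((GcnR c (c * n)).insplitR (Sum.inl ()) c (P1 c n)) (G1 c n hc) := by
  refine ⟨f1 c n hc, g1 c n hc, ?_, ?_⟩
  · rintro (⟨e | e, h⟩ | ⟨⟨e | e, h⟩, i⟩)
    · exact absurd rfl h
    · simp [f1, g1, G1, outsplitR, insplitR, GcnR, P0, P1, auxV, auxSrc, auxLoop]
    · simp [f1, g1, G1, outsplitR, insplitR, GcnR, P0, P1, auxV, auxSrc, auxLoop]
    · exact nomatch h
  · rintro (⟨e | e, h⟩ | ⟨⟨e | e, h⟩, i⟩)
    · exact absurd rfl h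
    · simp [f1, g1, G1, outsplitR, insplitR, GcnR, P0, P1, auxV, auxSrc, auxLoop]
    · simp [f1, g1, G1, outsplitR, insplitR, GcnR, P0, P1, auxV, auxSrc, auxLoop]
    · exact nomatch h

lemma move2 (hc : 2 ≤ c) : MoveIp (G1 c n hc) (G2 c n hc) := by
  refine ⟨GcnR c (c * n), Sum.inl (), c, P1 c n, Q1 c n hc,
    ⟨⟨⟨Sum.inl ⟨0, by omega⟩, rfl⟩⟩, ?_⟩, by omega, move2_iso c n hc, iso_refl _⟩
  haveI := finE c (c * n)
  infer_instance

/-- The non-`w3` vertices of `Gcn c (c*(n+c-1))` form a singleton. -/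
def auxW (hc : 2 ≤ c) :
    {v : (GcnR c (c * (n + c - 1))).V // v ≠ w3 c n hc} ≃ Unit where
  toFun _ := ()
  invFun _ := ⟨Sum.inl (), fun h => nomatch h⟩
  left_inv := by
    rintro ⟨v | t, h⟩
    · rfl
    · exfalso
      apply h
      have ht := t.isLt
      have h1 : min (c * (n + c - 1)) 1 ≤ 1 := min_le_right _ _
      simp only [w3]
      congr 1
      exact Fin.ext (by omega)
  right_inv _ := rfl

/-- The vertex equivalence for the iso between the outsplit of
`Gcn c (c*(n+c-1))` at its source along `P3` and the graph `G2`. -/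
noncomputable def f3 (hc : 2 ≤ c) :
    ((GcnR c (c * (n + c - 1))).outsplitR (w3 c n hc) (c - 1 + min n 1)
        (P3 c n hc)).V ≃ (G2 c n hc).V where
  toFun x := match x with
    | Sum.inl _ => Sum.inr (⟨0, by omega⟩ : Fin c)
    | Sum.inr t => Sum.elim
        (fun t' => Sum.inr (⟨t'.val + 1, by have := t'.isLt; omega⟩ : Fin c))
        (fun u => Sum.inl ⟨Sum.inr (Fin.cast (hmin c n (by omega)).symm u),
            fun hh => nomatch hh⟩)
        (finSumFinEquiv.symm t)
  invFun y := match y with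
    | Sum.inl ⟨Sum.inl _, h⟩ => absurd rfl h
    | Sum.inl ⟨Sum.inr u, _⟩ =>
        Sum.inr (finSumFinEquiv (Sum.inr (Fin.cast (hmin c n (by omega)) u)))
    | Sum.inr i =>
        if h : i.val = 0 then Sum.inl ⟨Sum.inl (), fun hh => nomatch hh⟩
        else Sum.inr (finSumFinEquiv (Sum.inl
          (⟨i.val - 1, by have := i.isLt; omega⟩ : Fin (c - 1))))
  left_inv := by
    rintro (⟨v | t, h⟩ | t)
    · simp
    · exfalso
      apply h
      have ht := t.isLt
      have h1 : min (c * (n + c - 1)) 1 ≤ 1 := min_le_right _ _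
      simp only [w3]
      exact congrArg Sum.inr (Fin.ext (by omega))
    · dsimp only
      rcases hq : finSumFinEquiv.symm t with t' | u
      · dsimp only [Sum.elim_inl]
        rw [dif_neg (by simp)]
        have h2 : (⟨t'.val + 1 - 1, by have := t'.isLt; omega⟩ : Fin (c - 1)) = t' :=
          Fin.ext (by simp)
        rw [h2, ← hq, Equiv.apply_symm_apply]
      · dsimp only [Sum.elim_inr]
        have h2 : Fin.cast (hmin c n (by omega))
            (Fin.cast (hmin c n (by omega)).symm u) = u := by simp
        rw [h2, ← hq, Equiv.apply_symm_apply]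
  right_inv := by
    rintro (⟨v | u, h⟩ | i)
    · exact absurd rfl h
    · dsimp only
      simp only [Equiv.symm_apply_apply, Sum.elim_inr]
      exact congrArg Sum.inl (Subtype.ext (congrArg Sum.inr (by simp)))
    · dsimp only
      rcases Nat.eq_zero_or_pos i.val with h0 | h0
      · rw [dif_pos h0]
        exact congrArg Sum.inr (Fin.ext (by simp; omega))
      · rw [dif_neg (by omega)]
        dsimp only
        simp only [Equiv.symm_apply_apply, Sum.elim_inl]
        exact congrArg Sum.inr (Fin.ext (by simp; omega))

noncomputable def g3 (hc : 2 ≤ c) :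
    ((GcnR c (c * (n + c - 1))).outsplitR (w3 c n hc) (c - 1 + min n 1)
        (P3 c n hc)).E ≃ (G2 c n hc).E where
  toFun x := match x with
    | Sum.inl ⟨Sum.inl ℓ, _⟩ => Sum.inr (⟨Sum.inl ℓ, rfl⟩, ⟨0, by omega⟩)
    | Sum.inl ⟨Sum.inr j, _⟩ => Sum.elim
        (fun q => Sum.inr (⟨Sum.inl (finProdFinEquiv.symm q).1, rfl⟩,
            ⟨(finProdFinEquiv.symm q).2.val + 1,
              by have := (finProdFinEquiv.symm q).2.isLt; omega⟩))
        (fun j' => Sum.inl ⟨Sum.inr j', fun hh => nomatch hh⟩)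
        (eN c n hc j)
    | Sum.inr (⟨e, he⟩, i) => nomatch he
  invFun y := match y with
    | Sum.inl ⟨Sum.inl _, h⟩ => absurd rfl h
    | Sum.inl ⟨Sum.inr j', _⟩ =>
        Sum.inl ⟨Sum.inr ((eN c n hc).symm (Sum.inr j')), fun hh => nomatch hh⟩
    | Sum.inr (⟨Sum.inl ℓ, _⟩, i) =>
        if h : i.val = 0 then Sum.inl ⟨Sum.inl ℓ, fun hh => nomatch hh⟩
        else Sum.inl ⟨Sum.inr ((eN c n hc).symm (Sum.inl (finProdFinEquiv
          (ℓ, ⟨i.val - 1, by have := i.isLt; omega⟩)))), fun hh => nomatch hh⟩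
    | Sum.inr (⟨Sum.inr _, h⟩, i) => nomatch h
  left_inv := by
    rintro (⟨ℓ | j, h⟩ | ⟨⟨e, he⟩, i⟩)
    · simp
    · dsimp only
      rcases hq : eN c n hc j with q | j'
      · dsimp only [Sum.elim_inl]
        rw [dif_neg (by simp)]
        refine congrArg Sum.inl (Subtype.ext (congrArg Sum.inr ?_))
        have h2 : (⟨(finProdFinEquiv.symm q).2.val + 1 - 1,
            by have := (finProdFinEquiv.symm q).2.isLt; omega⟩ : Fin (c - 1)) =
            (finProdFinEquiv.symm q).2 := Fin.ext (by simp)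
        rw [h2, Prod.mk.eta, Equiv.apply_symm_apply, ← hq, Equiv.symm_apply_apply]
      · dsimp only [Sum.elim_inr]
        refine congrArg Sum.inl (Subtype.ext (congrArg Sum.inr ?_))
        rw [← hq, Equiv.symm_apply_apply]
    · exact nomatch he
  right_inv := by
    rintro (⟨ℓ | j', h⟩ | ⟨⟨ℓ | j, hs⟩, i⟩)
    · exact absurd rfl h
    · dsimp only
      simp only [Equiv.apply_symm_apply, Sum.elim_inr]
    · dsimp only
      rcases Nat.eq_zero_or_pos i.val with h0 | h0
      · rw [dif_pos h0]
        refine congrArg Sum.inr ?_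
        refine Prod.ext (Subtype.ext rfl) (Fin.ext ?_)
        simp; omega
      · rw [dif_neg (by omega)]
        dsimp only
        simp only [Equiv.apply_symm_apply, Sum.elim_inl, Equiv.symm_apply_apply]
        refine congrArg Sum.inr ?_
        refine Prod.ext (Subtype.ext rfl) (Fin.ext ?_)
        simp; omega
    · exact nomatch hs

set_option maxHeartbeats 2000000 in
lemma move3_iso (hc : 2 ≤ c) :
    Iso ((GcnR c (c * (n + c - 1))).outsplitR (w3 c n hc) (c - 1 + min n 1)
      (P3 c n hc)) (G2 c n hc) := by
  refine ⟨f3 c n hc, g3 c n hc, ?_, ?_⟩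
  · rintro (⟨e | e, h⟩ | ⟨⟨e, he⟩, i⟩)
    · simp [f3, g3, G2, w3, outsplitR, insplitR, GcnR, P3, Q1]
    · rcases hq : (eN c n hc) e with q | j'
      · simp [f3, g3, G2, w3, outsplitR, insplitR, GcnR, P3, Q1, hq]
      · simp only [f3, g3, G2, w3, outsplitR, insplitR, GcnR, P3, Q1, hq]
        simp [hq]
        have h2 : (⟨c - 1, by have := minpos c n j'; omega⟩ : Fin (c - 1 + min n 1)) =
            Fin.natAdd (c - 1) (⟨0, minpos c n j'⟩ : Fin (min n 1)) := Fin.ext (by simp)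
        rw [h2, finSumFinEquiv_symm_apply_natAdd]
        exact congrArg Sum.inl (Subtype.ext (congrArg Sum.inr (Fin.ext (by simp))))
    · exact nomatch he
  · rintro (⟨e | e, h⟩ | ⟨⟨e, he⟩, i⟩)
    · simp [f3, g3, G2, w3, outsplitR, insplitR, GcnR, P3, Q1]
    · rcases hq : (eN c n hc) e with q | j'
      · simp [f3, g3, G2, w3, outsplitR, insplitR, GcnR, P3, Q1, hq]
      · simp [f3, g3, G2, w3, outsplitR, insplitR, GcnR, P3, Q1, hq]
    · exact nomatch he

lemma move3 (hc : 2 ≤ c) : MoveO (GcnR c (c * (n + c - 1))) (G2 c n hc) := by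
  have hN : 0 < c * (n + c - 1) := by
    have := Npos c n hc; omega
  refine ⟨w3 c n hc, c - 1 + min n 1, P3 c n hc,
    ⟨⟨Sum.inr ⟨0, hN⟩, rfl⟩⟩, ?_, ?_, move3_iso c n hc⟩
  · -- surjectivity of the partition map
    intro i
    obtain ⟨x, hx⟩ : ∃ x, finSumFinEquiv x = i := ⟨finSumFinEquiv.symm i, by simp⟩
    rcases x with t | u
    · refine ⟨⟨Sum.inr ((eN c n hc).symm
        (Sum.inl (finProdFinEquiv (⟨0, by omega⟩, t)))), rfl⟩, ?_⟩
      simp only [P3, Sum.elim_inr, Equiv.apply_symm_apply, Equiv.symm_apply_apply,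
        Sum.elim_inl, ← hx]
    · have hu : 0 < min n 1 := u.pos
      have hcn : 0 < c * n := by
        have : 0 < n := by omega
        exact Nat.mul_pos (by omega) this
      refine ⟨⟨Sum.inr ((eN c n hc).symm (Sum.inr ⟨0, hcn⟩)), rfl⟩, ?_⟩
      simp only [P3, Equiv.apply_symm_apply, Sum.elim_inr, ← hx]
      congr 2
      exact Fin.ext (by omega)
  · intro i j hi _
    haveI := finE c (c * (n + c - 1))
    exact absurd hi (Set.not_infinite.2 (Set.toFinite _))

end GcnAux

open GcnAux in
/-- For all integers `c ≥ 2` and `n ≥ 0`, the graphs `G(c,n)` and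
`G(c, c(n+c−1))` are move equivalent via the moves (O) and (I+). -/
theorem Gcn_moveEquiv_O_Iplus (c n : ℕ) (hc : 2 ≤ c) :
    MoveEquiv (fun A B => MoveO A B ∨ MoveIp A B)
      (Gcn c n) (Gcn c (c * (n + c - 1))) := by
  refine ⟨Gcn c (c * (n + c - 1)), ?_, iso_refl _⟩
  exact Relation.ReflTransGen.tail
    (Relation.ReflTransGen.tail
      (Relation.ReflTransGen.single (Or.inl (Or.inl (move1 c n hc))))
      (Or.inl (Or.inr (move2 c n hc))))
    (Or.inr (Or.inl (move3 c n hc)))
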